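/- arXiv:1410.7757 — 2 statements merged into one kernel-verified Lean document; each statement's English description precedes it below -/
import Mathlib

section
/- The Coulomb kernel 1/|x-y| on ℝ³ is positive definite: for any real-valued Schwartz function f, ∫∫ f(x) f(y) / |x-y| dx dy ≥ 0. -/
open MeasureTheory

section CoulombAuxSection
open Real Set
open scoped ENNReal

noncomputable section
namespace CoulombAux

abbrev E3 := EuclideanSpace ℝ (Fin 3)

lemma norm_ident (x y z : E3) :
    ‖x - z‖^2 + ‖z - y‖^2
      = 2*‖z - (2⁻¹ : ℝ) • (x+y)‖^2 + 2⁻¹*‖x-y‖^2 := by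
  set a : E3 := (2⁻¹ : ℝ) • (x - y) with ha
  set u : E3 := z - (2⁻¹ : ℝ) • (x + y) with hu
  have hx : x - z = a - u := by rw [ha, hu]; module
  have hz : z - y = a + u := by rw [ha, hu]; module
  have hxy : x - y = a + a := by rw [ha]; module
  rw [hx, hz, hxy]
  have h1 := norm_add_sq_real a u
  have h2 := norm_sub_sq_real a u
  have h3 := norm_add_sq_real a a
  nlinarith [real_inner_self_eq_norm_sq a]


lemma gauss_integrable {b : ℝ} (hb : 0 < b) :
    Integrable (fun v : E3 => rexp (-b * ‖v‖^2)) := by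
  have h := (GaussianFourier.integrable_cexp_neg_mul_sq_norm_add (V := E3)
    (b := (b:ℂ)) (by simpa using hb) 0 0).re
  refine h.congr (Filter.Eventually.of_forall fun v => ?_)
  show Complex.re (Complex.exp _) = _
  rw [show -(b:ℂ) * (‖v‖:ℂ)^2 + 0 * ((inner ℝ (0:E3) v : ℝ) : ℂ) = ((-b * ‖v‖^2 : ℝ) : ℂ) by
    push_cast; ring, Complex.exp_ofReal_re]

lemma gauss_sub_integrable {b : ℝ} (hb : 0 < b) (c : E3) :
    Integrable (fun z : E3 => rexp (-b * ‖c - z‖^2)) := by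
  have h := (gauss_integrable hb).comp_add_right (-c)
  refine h.congr (Filter.Eventually.of_forall fun z => ?_)
  simp only []
  rw [show z + -c = -(c - z) by abel, norm_neg]

lemma gauss_sub_integrable' {b : ℝ} (hb : 0 < b) (c : E3) :
    Integrable (fun z : E3 => rexp (-b * ‖z - c‖^2)) := by
  simpa [norm_sub_rev] using gauss_sub_integrable hb c


lemma gauss_conv {t : ℝ} (ht : 0 < t) (x y : E3) :
    ∫ z : E3, rexp (-(2*t) * ‖x - z‖^2) * rexp (-(2*t) * ‖z - y‖^2)
      = (π / (4*t)) ^ ((3:ℝ)/2) * rexp (-t * ‖x - y‖^2) := by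
  have h1 : ∀ z : E3, rexp (-(2*t) * ‖x - z‖^2) * rexp (-(2*t) * ‖z - y‖^2)
      = rexp (-t * ‖x-y‖^2) * rexp (-(4*t) * ‖z - (2⁻¹ : ℝ) • (x+y)‖^2) := by
    intro z
    rw [← Real.exp_add, ← Real.exp_add]
    congr 1
    have h := norm_ident x y z
    nlinarith [h]
  simp_rw [h1]
  rw [MeasureTheory.integral_const_mul]
  rw [show (fun z : E3 => rexp (-(4*t) * ‖z - (2⁻¹ : ℝ) • (x+y)‖^2))
      = fun z : E3 => (fun w : E3 => rexp (-(4*t) * ‖w‖^2)) (z - (2⁻¹ : ℝ) • (x+y)) from rfl,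
    integral_sub_right_eq_self (μ := volume) (fun w : E3 => rexp (-(4*t) * ‖w‖^2)) _]
  rw [GaussianFourier.integral_rexp_neg_mul_sq_norm (by positivity : (0:ℝ) < 4*t)]
  rw [finrank_euclideanSpace_fin]
  norm_num [mul_comm]

lemma rpow_three_halves {x : ℝ} (hx : 0 ≤ x) : x ^ ((3:ℝ)/2) = (√x)^3 := by
  rw [show (3:ℝ)/2 = (1/2 : ℝ) * (3:ℕ) by norm_num, Real.rpow_mul hx,
    Real.rpow_natCast, ← Real.sqrt_eq_rpow]

lemma weight_eq {t : ℝ} (ht : 0 < t) (r : ℝ) :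
    8*t/π^2 * ((π/(4*t))^((3:ℝ)/2) * rexp (-t * r^2))
      = (√π)⁻¹ * (t ^ ((1:ℝ)/2 - 1) * rexp (-(r^2 * t))) := by
  have hπ := pi_pos
  have h4t : (0:ℝ) < 4*t := by positivity
  have hd : (π/(4*t)) ^ ((3:ℝ)/2) = (√π)^3 / ((√(4*t))^3) := by
    rw [Real.div_rpow pi_pos.le h4t.le, rpow_three_halves pi_pos.le,
      rpow_three_halves h4t.le]
  have ht2 : t ^ ((1:ℝ)/2 - 1) = (√t)⁻¹ := by
    rw [show (1:ℝ)/2 - 1 = -(1/2) by norm_num, Real.rpow_neg ht.le, ← Real.sqrt_eq_rpow]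
  have h4 : √(4*t) = 2 * √t := by
    rw [Real.sqrt_mul (by norm_num), show √(4:ℝ) = 2 by
      rw [show (4:ℝ) = 2^2 by norm_num, Real.sqrt_sq (by norm_num)]]
  set p := √π with hp
  set s := √t with hs
  have hst : s > 0 := Real.sqrt_pos.2 ht
  have hsp : p > 0 := Real.sqrt_pos.2 pi_pos
  have hπe : π = p^2 := (Real.sq_sqrt pi_pos.le).symm
  have hte : t = s^2 := (Real.sq_sqrt ht.le).symm
  rw [hd, ht2, h4, show -t*r^2 = -(r^2*t) by ring]
  have key : 8*t/π^2 * (p^3/(2*s)^3) = p⁻¹ * s⁻¹ := by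
    rw [hte, hπe]; field_simp; ring
  calc 8*t/π^2 * (p^3/(2*s)^3 * rexp (-(r^2*t)))
      = (8*t/π^2 * (p^3/(2*s)^3)) * rexp (-(r^2*t)) := by ring
    _ = p⁻¹ * (s⁻¹ * rexp (-(r^2*t))) := by rw [key]; ring

lemma t_integral {r : ℝ} (hr : 0 < r) :
    ∫ t in Ioi (0:ℝ), 8*t/π^2 * ((π/(4*t))^((3:ℝ)/2) * rexp (-t * r^2)) = 1/r := by
  rw [setIntegral_congr_fun measurableSet_Ioi (fun t ht => weight_eq ht r)]
  rw [MeasureTheory.integral_const_mul,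
    Real.integral_rpow_mul_exp_neg_mul_Ioi (by norm_num : (0:ℝ) < 1/2)
      (by positivity : 0 < r^2)]
  rw [Real.Gamma_one_half_eq]
  have h1 : ((1:ℝ)/r^2) ^ ((1:ℝ)/2) = 1/r := by
    rw [← Real.sqrt_eq_rpow, one_div, Real.sqrt_inv, Real.sqrt_sq hr.le, one_div]
  rw [h1]
  have hsp : √π > 0 := Real.sqrt_pos.2 pi_pos
  field_simp



lemma intOn_inv_norm_ball :
    IntegrableOn (fun x : E3 => ‖x‖⁻¹) (Metric.ball 0 1) volume := by
  have hmeas : Measurable (fun x : E3 => ‖x‖⁻¹) := continuous_norm.measurable.inv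
  refine ⟨hmeas.aestronglyMeasurable, ?_⟩
  rw [hasFiniteIntegral_iff_ofReal (Filter.Eventually.of_forall fun x => by positivity)]
  set μ' := volume.restrict (Metric.ball (0:E3) 1) with hμ'
  rw [lintegral_eq_lintegral_meas_le μ'
    (Filter.Eventually.of_forall fun x => by positivity) hmeas.aemeasurable]
  have hb1 : ∀ t ∈ Ioc (0:ℝ) 1, μ' {a : E3 | t ≤ ‖a‖⁻¹} ≤ volume (Metric.ball (0:E3) 1) :=
    fun t _ => le_trans (measure_mono (subset_univ _))
      (by rw [hμ', Measure.restrict_apply_univ])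
  have hb2 : ∀ t ∈ Ioi (1:ℝ), μ' {a : E3 | t ≤ ‖a‖⁻¹}
      ≤ ENNReal.ofReal (t⁻¹^3) * volume (Metric.ball (0:E3) 1) := by
    intro t ht
    have ht0 : (0:ℝ) < t := lt_trans one_pos ht
    have hsub : {a : E3 | t ≤ ‖a‖⁻¹} ⊆ Metric.closedBall 0 t⁻¹ := by
      intro a ha
      simp only [mem_setOf_eq] at ha
      rcases eq_or_ne a 0 with rfl | h0
      · simp at ha; exact absurd (ha.trans_lt (by simpa using ht0)) (lt_irrefl _)
      · have hna : 0 < ‖a‖ := norm_pos_iff.2 h0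
        rw [Metric.mem_closedBall, dist_zero_right]
        rwa [le_inv_comm₀ ht0 hna] at ha
    calc μ' {a : E3 | t ≤ ‖a‖⁻¹} ≤ volume (Metric.closedBall (0:E3) t⁻¹) :=
          le_trans (Measure.restrict_le_self _) (measure_mono hsub)
      _ = ENNReal.ofReal (t⁻¹^3) * volume (Metric.ball (0:E3) 1) := by
          rw [Measure.addHaar_closedBall _ _ (by positivity : (0:ℝ) ≤ t⁻¹)]
          congr 2
          simp [finrank_euclideanSpace_fin]
  calc ∫⁻ t in Ioi (0:ℝ), μ' {a : E3 | t ≤ ‖a‖⁻¹}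
      ≤ ∫⁻ t in Ioc (0:ℝ) 1 ∪ Ioi 1, μ' {a : E3 | t ≤ ‖a‖⁻¹} :=
        lintegral_mono_set Ioi_subset_Ioc_union_Ioi
    _ ≤ (∫⁻ t in Ioc (0:ℝ) 1, μ' {a : E3 | t ≤ ‖a‖⁻¹})
        + ∫⁻ t in Ioi (1:ℝ), μ' {a : E3 | t ≤ ‖a‖⁻¹} := lintegral_union_le _ _ _
    _ < ∞ := by
        refine ENNReal.add_lt_top.2 ⟨?_, ?_⟩
        · calc ∫⁻ t in Ioc (0:ℝ) 1, μ' {a : E3 | t ≤ ‖a‖⁻¹}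
              ≤ ∫⁻ _ in Ioc (0:ℝ) 1, volume (Metric.ball (0:E3) 1) :=
                setLIntegral_mono' measurableSet_Ioc hb1
            _ = volume (Metric.ball (0:E3) 1) * volume (Ioc (0:ℝ) 1) := by
                rw [setLIntegral_const]
            _ < ∞ := ENNReal.mul_lt_top measure_ball_lt_top (by simp)
        · calc ∫⁻ t in Ioi (1:ℝ), μ' {a : E3 | t ≤ ‖a‖⁻¹}
              ≤ ∫⁻ t in Ioi (1:ℝ), ENNReal.ofReal (t⁻¹^3) * volume (Metric.ball (0:E3) 1) :=
                setLIntegral_mono' measurableSet_Ioi hb2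
            _ = (∫⁻ t in Ioi (1:ℝ), ENNReal.ofReal (t⁻¹^3)) * volume (Metric.ball (0:E3) 1) := by
                rw [lintegral_mul_const' _ _ measure_ball_lt_top.ne]
            _ < ∞ := by
                refine ENNReal.mul_lt_top ?_ measure_ball_lt_top
                have hint : IntegrableOn (fun t : ℝ => t ^ (-3 : ℝ)) (Ioi 1) :=
                  integrableOn_Ioi_rpow_of_lt (by norm_num) one_pos
                have := hint.setLIntegral_lt_top
                refine lt_of_le_of_lt (le_of_eq ?_) this
                refine setLIntegral_congr_fun measurableSet_Ioi
                  (fun t ht => ?_)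
                congr 1
                rw [show (-3:ℝ) = -((3:ℕ):ℝ) by norm_num,
                  Real.rpow_neg (le_of_lt (lt_trans one_pos ht)), Real.rpow_natCast, inv_pow]

lemma schwartz_bound (f : SchwartzMap E3 ℝ) :
    ∀ x, |f x| ≤ SchwartzMap.seminorm ℝ 0 0 f := by
  intro x
  have := SchwartzMap.le_seminorm ℝ 0 0 f x
  simpa [norm_iteratedFDeriv_zero] using this

/-- the cutoff singular kernel -/
def hB (u : E3) : ℝ := if ‖u‖ < 1 then ‖u‖⁻¹ else 0

lemma hB_integrable : Integrable hB volume := by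
  have : hB = Set.indicator (Metric.ball (0:E3) 1) (fun u => ‖u‖⁻¹) := by
    funext u
    rw [hB]
    by_cases h : ‖u‖ < 1
    · rw [if_pos h, Set.indicator_of_mem (by simpa [Metric.mem_ball, dist_zero_right] using h)]
    · rw [if_neg h, Set.indicator_of_notMem (by simpa [Metric.mem_ball, dist_zero_right] using h)]
  rw [this, integrable_indicator_iff measurableSet_ball]
  exact intOn_inv_norm_ball

lemma hB_nonneg (u : E3) : 0 ≤ hB u := by
  rw [hB]; split <;> positivity

lemma F_integrable (f : SchwartzMap E3 ℝ) :
    Integrable (fun p : E3 × E3 => f p.1 * f p.2 / ‖p.1 - p.2‖)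
      ((volume : Measure E3).prod volume) := by
  set M : ℝ := SchwartzMap.seminorm ℝ 0 0 f with hM
  have hMnn : 0 ≤ M := apply_nonneg _ _
  have hfi : Integrable f (volume : Measure E3) := f.integrable
  have hfa : Integrable (fun x : E3 => |f x|) volume := hfi.abs
  have hG : Integrable (fun q : E3 × E3 => |f q.1| * hB q.2)
      ((volume : Measure E3).prod volume) := hfa.mul_prod hB_integrable
  have hT : MeasurePreserving (fun p : E3 × E3 => (p.1, p.2 - p.1))
      ((volume : Measure E3).prod volume) ((volume : Measure E3).prod volume) :=
    measurePreserving_prod_sub volume volume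
  have hGc : Integrable (fun p : E3 × E3 => |f p.1| * hB (p.2 - p.1))
      ((volume : Measure E3).prod volume) :=
    (hT.integrable_comp hG.aestronglyMeasurable).2 hG
  have hD : Integrable (fun p : E3 × E3 =>
      M * (|f p.1| * hB (p.2 - p.1)) + |f p.1| * |f p.2|)
      ((volume : Measure E3).prod volume) :=
    (hGc.const_mul M).add (hfa.mul_prod hfa)
  refine hD.mono' ?_ (Filter.Eventually.of_forall fun p => ?_)
  · apply Measurable.aestronglyMeasurable
    apply Measurable.div
    · exact ((f.continuous.measurable.comp measurable_fst).mul
        (f.continuous.measurable.comp measurable_snd))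
    · exact (measurable_fst.sub measurable_snd).norm
  · obtain ⟨x, y⟩ := p
    simp only [norm_div, norm_mul, Real.norm_eq_abs, abs_norm]
    have hrev : hB (y - x) = if ‖x - y‖ < 1 then ‖x - y‖⁻¹ else 0 := by
      rw [hB, norm_sub_rev]
    by_cases hlt : ‖x - y‖ < 1
    · have h1 : |f x| * |f y| / ‖x - y‖ ≤ M * (|f x| * ‖x - y‖⁻¹) := by
        rw [div_eq_mul_inv]
        calc |f x| * |f y| * ‖x - y‖⁻¹ ≤ |f x| * M * ‖x - y‖⁻¹ := by
              gcongr; exact schwartz_bound f y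
          _ = M * (|f x| * ‖x - y‖⁻¹) := by ring
      refine h1.trans ?_
      rw [hrev, if_pos hlt]
      have : (0:ℝ) ≤ |f x| * |f y| := by positivity
      linarith
    · push_neg at hlt
      have h1 : |f x| * |f y| / ‖x - y‖ ≤ |f x| * |f y| :=
        div_le_self (by positivity) hlt
      refine h1.trans ?_
      rw [hrev, if_neg (not_lt.2 hlt), mul_zero, mul_zero, zero_add]

/-- The Gaussian-resolved Coulomb kernel integrand. -/
def Phi (A B : ℝ) (x y : E3) (q : ℝ × E3) : ℝ :=
  (8*q.1/π^2) * (A * rexp (-(2*q.1) * ‖x - q.2‖^2)) * (B * rexp (-(2*q.1) * ‖q.2 - y‖^2))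

lemma inner_z_integrable {t : ℝ} (ht : 0 < t) (x y : E3) :
    Integrable (fun z : E3 =>
      rexp (-(2*t) * ‖x - z‖^2) * rexp (-(2*t) * ‖z - y‖^2)) volume := by
  refine (gauss_sub_integrable' (by positivity : (0:ℝ) < 2*t) y).bdd_mul (c := 1) ?_ (Filter.Eventually.of_forall fun z => ?_)
  · exact (Real.continuous_exp.comp (by fun_prop)).aestronglyMeasurable
  · rw [Real.norm_eq_abs, abs_of_pos (Real.exp_pos _), Real.exp_le_one_iff]
    have : (0:ℝ) ≤ ‖x - z‖^2 := by positivity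
    nlinarith

lemma inner_z_eval (A B : ℝ) {t : ℝ} (ht : 0 < t) (x y : E3) :
    ∫ z : E3, Phi A B x y (t, z)
      = (A*B) * (8*t/π^2 * ((π/(4*t))^((3:ℝ)/2) * rexp (-t * ‖x - y‖^2))) := by
  have h : (fun z : E3 => Phi A B x y (t, z))
      = fun z : E3 => (8*t/π^2 * A * B) *
        (rexp (-(2*t) * ‖x - z‖^2) * rexp (-(2*t) * ‖z - y‖^2)) := by
    funext z; simp only [Phi]; ring
  rw [h, MeasureTheory.integral_const_mul, gauss_conv ht x y]
  ring

lemma phi_norm_eq (A B : ℝ) {t : ℝ} (ht : 0 < t) (x y : E3) (z : E3) :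
    ‖Phi A B x y (t, z)‖
      = Phi |A| |B| x y (t, z) := by
  simp only [Phi, Real.norm_eq_abs, abs_mul]
  rw [abs_of_pos (Real.exp_pos _), abs_of_pos (Real.exp_pos _),
    abs_of_pos (show (0:ℝ) < 8*t/π^2 by positivity)]

lemma sigma_integrable (A B : ℝ) (x y : E3) (hxy : x ≠ y) :
    Integrable (Phi A B x y) ((volume.restrict (Ioi (0:ℝ))).prod volume) := by
  set r : ℝ := ‖x - y‖ with hr
  have hr0 : 0 < r := by rw [hr]; exact norm_pos_iff.2 (sub_ne_zero.2 hxy)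
  have hmeas : AEStronglyMeasurable (Phi A B x y)
      ((volume.restrict (Ioi (0:ℝ))).prod volume) := by
    apply Continuous.aestronglyMeasurable
    unfold Phi
    fun_prop
  rw [integrable_prod_iff hmeas]
  constructor
  · filter_upwards [ae_restrict_mem measurableSet_Ioi] with t ht
    have h : (fun z : E3 => Phi A B x y (t, z))
        = fun z : E3 => (8*t/π^2 * A * B) *
          (rexp (-(2*t) * ‖x - z‖^2) * rexp (-(2*t) * ‖z - y‖^2)) := by
      funext z; simp only [Phi]; ring
    rw [h]
    exact (inner_z_integrable ht x y).const_mul _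
  · have base : IntegrableOn (fun t : ℝ => t ^ ((1:ℝ)/2 - 1) * rexp (-(r^2 * t))) (Ioi 0) := by
      have := integrableOn_rpow_mul_exp_neg_mul_rpow
        (p := 1) (s := (1:ℝ)/2 - 1) (b := r^2) (by norm_num) one_pos (by positivity)
      refine this.congr_fun (fun t ht => ?_) measurableSet_Ioi
      dsimp only; rw [Real.rpow_one]; ring_nf
    have base' : Integrable (fun t : ℝ => (|A| * |B| * (√π)⁻¹) *
        (t ^ ((1:ℝ)/2 - 1) * rexp (-(r^2 * t)))) (volume.restrict (Ioi 0)) :=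
      base.const_mul _
    refine base'.congr ?_
    filter_upwards [ae_restrict_mem measurableSet_Ioi] with t ht
    have h1 : ∀ z : E3, ‖Phi A B x y (t, z)‖ = Phi |A| |B| x y (t, z) :=
      fun z => phi_norm_eq A B ht x y z
    calc (|A| * |B| * (√π)⁻¹) * (t ^ ((1:ℝ)/2 - 1) * rexp (-(r^2 * t)))
        = (|A| * |B|) * ((√π)⁻¹ * (t ^ ((1:ℝ)/2 - 1) * rexp (-(r^2 * t)))) := by ring
      _ = (|A| * |B|) * (8*t/π^2 * ((π/(4*t))^((3:ℝ)/2) * rexp (-t * r^2))) := by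
          rw [weight_eq ht r]
      _ = ∫ z : E3, Phi |A| |B| x y (t, z) := (inner_z_eval |A| |B| ht x y).symm
      _ = ∫ z : E3, ‖Phi A B x y (t, z)‖ := by
          exact (integral_congr_ae (Filter.Eventually.of_forall fun z => (h1 z).symm))

lemma sigma_eval (A B : ℝ) (x y : E3) (hxy : x ≠ y) :
    ∫ q, Phi A B x y q ∂((volume.restrict (Ioi (0:ℝ))).prod volume)
      = A * B / ‖x - y‖ := by
  have hr0 : 0 < ‖x - y‖ := norm_pos_iff.2 (sub_ne_zero.2 hxy)
  rw [MeasureTheory.integral_prod _ (sigma_integrable A B x y hxy)]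
  rw [setIntegral_congr_fun measurableSet_Ioi
    (fun t ht => inner_z_eval A B ht x y)]
  rw [MeasureTheory.integral_const_mul, t_integral hr0]
  rw [mul_one_div]

lemma ae_fst_pos :
    ∀ᵐ q ∂((volume.restrict (Ioi (0:ℝ))).prod (volume : Measure E3)), 0 < q.1 := by
  rw [ae_iff]
  have h : {q : ℝ × E3 | ¬ 0 < q.1} = (Ioi (0:ℝ))ᶜ ×ˢ (univ : Set E3) := by
    ext q; simp
  rw [h, Measure.prod_prod, Measure.restrict_apply measurableSet_Ioi.compl]
  rw [show (Ioi (0:ℝ))ᶜ ∩ Ioi 0 = ∅ from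
    Set.eq_empty_iff_forall_notMem.2 (fun u hu => hu.1 hu.2)]
  simp

lemma diag_null :
    ((volume : Measure E3).prod volume) {p : E3 × E3 | p.1 = p.2} = 0 := by
  have hT : MeasurePreserving (fun p : E3 × E3 => (p.1 - p.2, p.2))
      ((volume : Measure E3).prod volume) ((volume : Measure E3).prod volume) :=
    measurePreserving_sub_prod volume volume
  have hset : {p : E3 × E3 | p.1 = p.2}
      = (fun p : E3 × E3 => (p.1 - p.2, p.2)) ⁻¹' (({0} : Set E3) ×ˢ univ) := by
    ext p; simp [sub_eq_zero, eq_comm]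
  rw [hset, hT.measure_preimage
    (((measurableSet_singleton 0).prod MeasurableSet.univ).nullMeasurableSet)]
  rw [Measure.prod_prod]
  simp

theorem main (f : SchwartzMap E3 ℝ) :
    0 ≤ ∫ x : E3, ∫ y : E3, f x * f y / ‖x - y‖ := by
  have hI2 := F_integrable f
  have hae : ∀ᵐ p ∂((volume : Measure E3).prod volume), p.1 ≠ p.2 := by
    rw [ae_iff]
    simpa using diag_null
  set Φf : E3 × E3 → ℝ × E3 → ℝ := fun p q => Phi (f p.1) (f p.2) p.1 p.2 q with hΦf
  have hcont : Continuous (Function.uncurry Φf) := by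
    have hc : Continuous f := f.continuous
    unfold Φf
    unfold Phi
    fun_prop
  have hnorm_int : ∀ p : E3 × E3, p.1 ≠ p.2 →
      ∫ q, ‖Φf p q‖ ∂((volume.restrict (Ioi (0:ℝ))).prod volume)
        = |f p.1| * |f p.2| / ‖p.1 - p.2‖ := by
    intro p hp
    have h := integral_congr_ae (μ := (volume.restrict (Ioi (0:ℝ))).prod volume)
      (f := fun q => ‖Φf p q‖) (g := fun q => Phi |f p.1| |f p.2| p.1 p.2 q) ?_
    · rw [h, sigma_eval _ _ _ _ hp]
    · filter_upwards [ae_fst_pos] with q hq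
      exact phi_norm_eq _ _ hq _ _ _
  have hbig : Integrable (Function.uncurry Φf)
      (((volume : Measure E3).prod volume).prod
        ((volume.restrict (Ioi (0:ℝ))).prod volume)) := by
    rw [integrable_prod_iff hcont.aestronglyMeasurable]
    constructor
    · filter_upwards [hae] with p hp
      simpa [Function.uncurry_apply_pair] using sigma_integrable (f p.1) (f p.2) p.1 p.2 hp
    · refine (hI2.norm).congr ?_
      filter_upwards [hae] with p hp
      simp only [Function.uncurry_apply_pair]
      rw [hnorm_int p hp, Real.norm_eq_abs, abs_div, abs_mul, abs_norm]
  have hswap := integral_integral_swap (μ := (volume : Measure E3).prod volume)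
    (ν := (volume.restrict (Ioi (0:ℝ))).prod volume) (f := Φf) hbig
  have h1 : ∫ x : E3, ∫ y : E3, f x * f y / ‖x - y‖
      = ∫ p, f p.1 * f p.2 / ‖p.1 - p.2‖ ∂((volume : Measure E3).prod volume) :=
    (integral_prod _ hI2).symm
  have h2 : ∫ p, f p.1 * f p.2 / ‖p.1 - p.2‖ ∂((volume : Measure E3).prod volume)
      = ∫ p, (∫ q, Φf p q ∂((volume.restrict (Ioi (0:ℝ))).prod volume))
          ∂((volume : Measure E3).prod volume) := by
    refine integral_congr_ae ?_
    filter_upwards [hae] with p hp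
    rw [sigma_eval _ _ _ _ hp]
  rw [h1, h2, hswap]
  refine integral_nonneg_of_ae ?_
  filter_upwards [ae_fst_pos] with q hq
  have hfac2 : (fun p : E3 × E3 => Φf p q)
      = fun p : E3 × E3 =>
        ((fun x : E3 => (8*q.1/π^2) * (f x * rexp (-(2*q.1) * ‖x - q.2‖^2))) p.1)
        * ((fun y : E3 => f y * rexp (-(2*q.1) * ‖q.2 - y‖^2)) p.2) := by
    funext p
    simp only [hΦf, Phi]
  simp only [Pi.zero_apply]
  rw [hfac2]
  have hpm := integral_prod_mul (μ := (volume : Measure E3)) (ν := (volume : Measure E3))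
    (f := fun x : E3 => (8*q.1/π^2) * (f x * rexp (-(2*q.1) * ‖x - q.2‖^2)))
    (g := fun y : E3 => f y * rexp (-(2*q.1) * ‖q.2 - y‖^2))
  rw [hpm, MeasureTheory.integral_const_mul]
  have hsame : ∫ x : E3, f x * rexp (-(2*q.1) * ‖x - q.2‖^2)
      = ∫ y : E3, f y * rexp (-(2*q.1) * ‖q.2 - y‖^2) := by
    refine integral_congr_ae (Filter.Eventually.of_forall fun w => ?_)
    show f w * rexp (-(2*q.1) * ‖w - q.2‖^2) = f w * rexp (-(2*q.1) * ‖q.2 - w‖^2)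
    rw [norm_sub_rev]
  rw [hsame]
  have h8 : (0:ℝ) ≤ 8*q.1/π^2 := by positivity
  nlinarith [mul_self_nonneg (∫ y : E3, f y * rexp (-(2*q.1) * ‖q.2 - y‖^2))]


end CoulombAux
end
end CoulombAuxSection

/-- The Coulomb kernel on ℝ³ is positive definite: for a real Schwartz function `f`,
`∫∫ f(x) f(y) / |x-y| dx dy ≥ 0`. -/
theorem coulomb_kernel_posdef
    (f : SchwartzMap (EuclideanSpace ℝ (Fin 3)) ℝ) :
    0 ≤ ∫ x, ∫ y, f x * f y / ‖x - y‖ := CoulombAux.main f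
end

section
/- In a pivoted QR decomposition M E = Q R with R upper triangular with nonincreasing absolute values of diagonal entries, for any k the (k+1)-th largest singular value of M is bounded: σ_{k+1}(M) ≤ ‖R_{k+1:, k+1:}‖₂ where R_{k+1:, k+1:} is the trailing submatrix of R. -/
open Matrix

/-- Spectral (operator ℓ²→ℓ²) norm of a real matrix. -/
noncomputable def specNorm {a b : ℕ} (A : Matrix (Fin a) (Fin b) ℝ) : ℝ :=
  ‖LinearMap.toContinuousLinearMap (Matrix.toEuclideanLin A)‖

/-- The `(k+1)`-th singular value of `M`, characterized (Eckart–Young) as the distance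
in spectral norm from `M` to the set of matrices of rank at most `k`. -/
noncomputable def singularValueSucc {a b : ℕ} (M : Matrix (Fin a) (Fin b) ℝ) (k : ℕ) : ℝ :=
  sInf {r : ℝ | ∃ A : Matrix (Fin a) (Fin b) ℝ, A.rank ≤ k ∧ r = specNorm (M - A)}

lemma euclid_norm_sq {p : ℕ} (x : EuclideanSpace ℝ (Fin p)) :
    ‖x‖ = Real.sqrt (∑ i, x i * x i) := by
  rw [EuclideanSpace.norm_eq]
  congr 1; apply Finset.sum_congr rfl; intro i _
  rw [Real.norm_eq_abs, sq_abs, sq]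

lemma norm_orth {p : ℕ} {Q : Matrix (Fin p) (Fin p) ℝ} (hQ : Qᵀ * Q = 1)
    (v : EuclideanSpace ℝ (Fin p)) : ‖Matrix.toEuclideanLin Q v‖ = ‖v‖ := by
  rw [euclid_norm_sq, euclid_norm_sq]
  congr 1
  have hv : ∀ i, (Matrix.toEuclideanLin Q v) i = (Q *ᵥ (fun j => v j)) i := fun i => rfl
  simp_rw [hv]
  set w : Fin p → ℝ := fun j => v j with hw
  have key : (Q *ᵥ w) ⬝ᵥ (Q *ᵥ w) = w ⬝ᵥ w := by
    calc (Q *ᵥ w) ⬝ᵥ (Q *ᵥ w) = ((Q *ᵥ w) ᵥ* Q) ⬝ᵥ w := Matrix.dotProduct_mulVec _ _ _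
      _ = ((w ᵥ* Qᵀ) ᵥ* Q) ⬝ᵥ w := by rw [Matrix.vecMul_transpose]
      _ = (w ᵥ* (Qᵀ * Q)) ⬝ᵥ w := by rw [Matrix.vecMul_vecMul]
      _ = w ⬝ᵥ w := by rw [hQ, Matrix.vecMul_one]
  simpa [dotProduct, hw] using key

lemma toEuclideanLin_mul' {a b c : ℕ} (A : Matrix (Fin a) (Fin b) ℝ)
    (B : Matrix (Fin b) (Fin c) ℝ) (x : EuclideanSpace ℝ (Fin c)) :
    Matrix.toEuclideanLin (A * B) x = Matrix.toEuclideanLin A (Matrix.toEuclideanLin B x) := by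
  simp [Matrix.toEuclideanLin_apply, Matrix.mulVec_mulVec]

lemma sum_offset {p k : ℕ} (f : Fin p → ℝ) (h0 : ∀ i : Fin p, (i : ℕ) < k → f i = 0) :
    ∑ i, f i = ∑ i : Fin (p - k), f ⟨k + i.1, by have := i.2; apply Nat.lt_of_lt_of_le _ le_rfl; omega⟩ := by
  classical
  let e : Fin (p - k) ↪ Fin p :=
    ⟨fun i => ⟨k + i.1, by have := i.2; apply Nat.lt_of_lt_of_le _ le_rfl; omega⟩, by
      intro a b h
      have h' : k + a.1 = k + b.1 := congrArg Fin.val h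
      exact Fin.ext (by omega)⟩
  have h1 : ∑ i ∈ Finset.univ.map e, f i
      = ∑ i : Fin (p - k), f ⟨k + i.1, by have := i.2; apply Nat.lt_of_lt_of_le _ le_rfl; omega⟩ :=
    Finset.sum_map _ _ _
  rw [← h1]
  refine (Finset.sum_subset (Finset.subset_univ _) ?_).symm
  intro x _ hx
  refine h0 x ?_
  by_contra hlt
  push_neg at hlt
  exact hx (Finset.mem_map.2 ⟨⟨x.1 - k, by have := x.2; omega⟩, Finset.mem_univ _,
    Fin.ext (by show k + (x.1 - k) = x.1; omega)⟩)

lemma sum_offset_le {p k : ℕ} (f : Fin p → ℝ) (h0 : ∀ i, 0 ≤ f i) :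
    ∑ i : Fin (p - k), f ⟨k + i.1, by have := i.2; apply Nat.lt_of_lt_of_le _ le_rfl; omega⟩ ≤ ∑ i, f i := by
  classical
  let e : Fin (p - k) ↪ Fin p :=
    ⟨fun i => ⟨k + i.1, by have := i.2; apply Nat.lt_of_lt_of_le _ le_rfl; omega⟩, by
      intro a b h
      have h' : k + a.1 = k + b.1 := congrArg Fin.val h
      exact Fin.ext (by omega)⟩
  have h1 : ∑ i ∈ Finset.univ.map e, f i
      = ∑ i : Fin (p - k), f ⟨k + i.1, by have := i.2; apply Nat.lt_of_lt_of_le _ le_rfl; omega⟩ :=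
    Finset.sum_map _ _ _
  rw [← h1]
  exact Finset.sum_le_sum_of_subset_of_nonneg (Finset.subset_univ _) (fun i _ _ => h0 i)

/-- In a pivoted QR decomposition `M E = Q R` with `R` upper triangular with
nonincreasing absolute values of its diagonal entries, for any `k` the `(k+1)`-th
singular value of `M` is bounded by the spectral norm of the trailing submatrix
`R_{k+1:, k+1:}`. -/
theorem pivoted_qr_singular_value_bound
    {m n : ℕ} (M : Matrix (Fin m) (Fin n) ℝ)
    (E : Matrix (Fin n) (Fin n) ℝ) (σ : Equiv.Perm (Fin n)) (hE : E = σ.permMatrix ℝ)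
    (Q : Matrix (Fin m) (Fin m) ℝ) (hQ : Qᵀ * Q = 1)
    (R : Matrix (Fin m) (Fin n) ℝ)
    (hQR : M * E = Q * R)
    (htri : ∀ (i : Fin m) (j : Fin n), (j : ℕ) < (i : ℕ) → R i j = 0)
    (hdiag : ∀ (i j : Fin m) (hi : (i : ℕ) < n) (hj : (j : ℕ) < n), i ≤ j →
      |R j ⟨(j : ℕ), hj⟩| ≤ |R i ⟨(i : ℕ), hi⟩|)
    (k : ℕ) :
    singularValueSucc M k ≤
      specNorm (R.submatrix
        (fun i : Fin (m - k) => (⟨k + i.1, by have := i.2; omega⟩ : Fin m))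
        (fun j : Fin (n - k) => (⟨k + j.1, by have := j.2; omega⟩ : Fin n))) := by
  classical
  set T := R.submatrix
        (fun i : Fin (m - k) => (⟨k + i.1, by have := i.2; omega⟩ : Fin m))
        (fun j : Fin (n - k) => (⟨k + j.1, by have := j.2; omega⟩ : Fin n)) with hT
  have hEE : E * Eᵀ = 1 := by
    rw [hE, ← PEquiv.toMatrix_symm, ← PEquiv.toMatrix_trans, ← Equiv.toPEquiv_symm,
      ← Equiv.toPEquiv_trans, Equiv.self_trans_symm, Equiv.toPEquiv_refl, PEquiv.toMatrix_refl]
  have hM : M = Q * R * Eᵀ := by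
    have h := congrArg (fun X => X * Eᵀ) hQR
    simpa [Matrix.mul_assoc, hEE] using h
  set d : Fin m → ℝ := fun i => if (i : ℕ) < k then 1 else 0 with hd
  set d' : Fin m → ℝ := fun i => if (i : ℕ) < k then 0 else 1 with hd'
  set N : Matrix (Fin m) (Fin n) ℝ := Matrix.diagonal d' * R with hN
  set A : Matrix (Fin m) (Fin n) ℝ := Q * (Matrix.diagonal d * R) * Eᵀ with hA
  -- rank bound
  have hrank : A.rank ≤ k := by
    refine le_trans (Matrix.rank_mul_le_left _ _) ?_
    refine le_trans (Matrix.rank_mul_le_right _ _) ?_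
    refine le_trans (Matrix.rank_mul_le_left _ _) ?_
    rw [Matrix.rank_diagonal]
    have hinj : Function.Injective
        (fun i : {i : Fin m // d i ≠ 0} => (⟨i.1.1, by
          rcases i with ⟨i, hi⟩
          by_contra h
          exact hi (by simp only [hd]; rw [if_neg h])⟩ : Fin k)) := by
      intro a b h
      have h2 := congrArg Fin.val h
      simp only [] at h2
      exact Subtype.ext (Fin.ext h2)
    simpa using Fintype.card_le_of_injective _ hinj
  -- M - A = Q * N * Eᵀ
  have hdd : Matrix.diagonal d' = 1 - Matrix.diagonal d := by
    ext i j
    by_cases h : i = j <;>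
      simp [Matrix.diagonal_apply, Matrix.one_apply, h, hd, hd', Matrix.sub_apply] <;>
      by_cases h2 : (j : ℕ) < k <;> simp [h2]
  have hMA : M - A = Q * N * Eᵀ := by
    rw [hM, hA, hN, hdd, Matrix.sub_mul, Matrix.one_mul, Matrix.mul_sub, Matrix.sub_mul]
  -- norm bound
  have hNorm : specNorm (M - A) ≤ specNorm T := by
    rw [hMA]
    unfold specNorm
    refine ContinuousLinearMap.opNorm_le_bound _ (norm_nonneg _) ?_
    intro v
    rw [LinearMap.coe_toContinuousLinearMap']
    rw [toEuclideanLin_mul', toEuclideanLin_mul', norm_orth hQ]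
    set u : EuclideanSpace ℝ (Fin n) := Matrix.toEuclideanLin Eᵀ v with hu
    have huv : ‖u‖ = ‖v‖ :=
      norm_orth (by rw [Matrix.transpose_transpose]; exact hEE) v
    set u' : EuclideanSpace ℝ (Fin (n - k)) :=
      (WithLp.equiv 2 (Fin (n - k) → ℝ)).symm
        (fun j => u ⟨k + j.1, by have := j.2; omega⟩) with hu'
    -- entries of N applied
    have hNe : ∀ (i : Fin m) (j : Fin n), N i j = d' i * R i j := by
      intro i j
      simp [hN, Matrix.diagonal_mul]
    have happ : ∀ i : Fin m,
        (Matrix.toEuclideanLin N u) i = ∑ j, N i j * u j := fun i => rfl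
    have happT : ∀ i : Fin (m - k),
        (Matrix.toEuclideanLin T u') i = ∑ j, T i j * u' j := fun i => rfl
    -- step 1 : equality of norms
    have hstep1 : ‖Matrix.toEuclideanLin N u‖ = ‖Matrix.toEuclideanLin T u'‖ := by
      rw [euclid_norm_sq, euclid_norm_sq]
      congr 1
      have hzero : ∀ i : Fin m, (i : ℕ) < k →
          (Matrix.toEuclideanLin N u) i * (Matrix.toEuclideanLin N u) i = 0 := by
        intro i hi
        have : (Matrix.toEuclideanLin N u) i = 0 := by
          rw [happ]
          refine Finset.sum_eq_zero fun j _ => ?_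
          rw [hNe]
          simp [hd', hi]
        rw [this, mul_zero]
      rw [sum_offset (k := k) _ hzero]
      refine Finset.sum_congr rfl fun i _ => ?_
      have hcoord : (Matrix.toEuclideanLin N u) ⟨k + i.1, by have := i.2; omega⟩
          = (Matrix.toEuclideanLin T u') i := by
        rw [happ, happT]
        have hz : ∀ j : Fin n, (j : ℕ) < k →
            N ⟨k + i.1, by have := i.2; omega⟩ j * u j = 0 := by
          intro j hj
          rw [hNe, htri _ _ (by simp; omega)]
          ring
        rw [sum_offset (k := k) _ hz]
        refine Finset.sum_congr rfl fun j _ => ?_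
        rw [hNe]
        have : d' (⟨k + i.1, by have := i.2; omega⟩ : Fin m) = 1 := by
          simp [hd']
        rw [this, one_mul]
        rfl
      rw [hcoord]
    -- step 2 : operator norm bound for T
    have hstep2 : ‖Matrix.toEuclideanLin T u'‖
        ≤ ‖LinearMap.toContinuousLinearMap (Matrix.toEuclideanLin T)‖ * ‖u'‖ := by
      have h := (LinearMap.toContinuousLinearMap (Matrix.toEuclideanLin T)).le_opNorm u'
      simpa [LinearMap.coe_toContinuousLinearMap'] using h
    -- step 3 : ‖u'‖ ≤ ‖u‖
    have hstep3 : ‖u'‖ ≤ ‖u‖ := by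
      rw [euclid_norm_sq, euclid_norm_sq]
      apply Real.sqrt_le_sqrt
      have := sum_offset_le (p := n) (k := k) (fun j => u j * u j)
        (fun j => mul_self_nonneg _)
      exact this
    calc ‖Matrix.toEuclideanLin N u‖
        = ‖Matrix.toEuclideanLin T u'‖ := hstep1
      _ ≤ ‖LinearMap.toContinuousLinearMap (Matrix.toEuclideanLin T)‖ * ‖u'‖ := hstep2
      _ ≤ ‖LinearMap.toContinuousLinearMap (Matrix.toEuclideanLin T)‖ * ‖u‖ :=
          mul_le_mul_of_nonneg_left hstep3 (norm_nonneg _)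
      _ = ‖LinearMap.toContinuousLinearMap (Matrix.toEuclideanLin T)‖ * ‖v‖ := by rw [huv]
  -- conclude
  have hbdd : BddBelow {r : ℝ | ∃ B : Matrix (Fin m) (Fin n) ℝ, B.rank ≤ k ∧ r = specNorm (M - B)} := by
    refine ⟨0, ?_⟩
    rintro r ⟨B, -, rfl⟩
    exact norm_nonneg _
  exact csInf_le_of_le hbdd ⟨A, hrank, rfl⟩ hNorm
end
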